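/- Key inequalities in the degree-threshold proof for the social optimum: let y* be an admissible social planner action with y*_{d†} > 0 and y*_{d'} < m_{d'} for some d' > d†, and let y† = y* + ε(u_{d'} − u_{d†}) for 0 < ε < min(y*_{d†}, m_{d'} − y*_{d'}). Then γ(y†) < γ(y*) and λ(y†) < λ(y*), and consequently e(y†) < e(y*). -/

import Mathlib

open Finset

/-- `𝒟 = {1, …, D_max}`. -/
def Dset (Dmax : ℕ) : Finset ℕ := Finset.Icc 1 Dmax

/-- Weighted degree distribution `w_d = d·m_d / ∑ d'·m_{d'}`. -/
noncomputable def wgt (Dmax : ℕ) (m : ℕ → ℝ) (d : ℕ) : ℝ :=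
  (d : ℝ) * m d / ∑ d' ∈ Dset Dmax, (d' : ℝ) * m d'

/-- `γ(y) = β_IA · ∑_d w_d (p_U − (y_d/m_d)·Δp)` where `Δp = p_U − p_P`. -/
noncomputable def gam (Dmax : ℕ) (m : ℕ → ℝ) (pP pU βIA : ℝ) (y : ℕ → ℝ) : ℝ :=
  βIA * ∑ d ∈ Dset Dmax, wgt Dmax m d * (pU - (y d / m d) * (pU - pP))

/-- `λ(y) = β_IA · ∑_d w_d (d−1) (p_U − (y_d/m_d)·Δp)`. -/
noncomputable def lamb (Dmax : ℕ) (m : ℕ → ℝ) (pP pU βIA : ℝ) (y : ℕ → ℝ) : ℝ :=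
  βIA * ∑ d ∈ Dset Dmax, wgt Dmax m d * ((d : ℝ) - 1) * (pU - (y d / m d) * (pU - pP))

/-- Risk exposure `e(y) = γ(y) · ∑_{k=1}^{K} λ(y)^{k−1}`. -/
noncomputable def expo (Dmax : ℕ) (m : ℕ → ℝ) (pP pU βIA : ℝ) (K : ℕ)
    (y : ℕ → ℝ) : ℝ :=
  gam Dmax m pP pU βIA y * ∑ k ∈ Finset.range K, lamb Dmax m pP pU βIA y ^ k

/-- Social cost
`SC(y) = ∑_d [ y_d·C_{d,P}(X(y)) + (m_d − y_d)·C_{d,N}(X(y)) ]` with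
`C_{d,P} = τ(1 + d·e(y))L_P + c_P` and `C_{d,N} = τ(1 + d·e(y))L_U`. -/
noncomputable def SC (Dmax : ℕ) (m : ℕ → ℝ) (pP pU βIA τ LP LU cP : ℝ) (K : ℕ)
    (y : ℕ → ℝ) : ℝ :=
  ∑ d ∈ Dset Dmax,
    (y d * (τ * (1 + (d : ℝ) * expo Dmax m pP pU βIA K y) * LP + cP)
      + (m d - y d) * (τ * (1 + (d : ℝ) * expo Dmax m pP pU βIA K y) * LU))

/-- Admissible social planner action: `y_d ∈ [0, m_d]` for each `d ∈ 𝒟`. -/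
def isPlan (Dmax : ℕ) (m : ℕ → ℝ) (y : ℕ → ℝ) : Prop :=
  ∀ d ∈ Dset Dmax, 0 ≤ y d ∧ y d ≤ m d

lemma sum_pos_S (Dmax : ℕ) (m : ℕ → ℝ) (hm : ∀ d ∈ Dset Dmax, 0 < m d)
    {a : ℕ} (ha : a ∈ Dset Dmax) :
    0 < ∑ d ∈ Dset Dmax, (d : ℝ) * m d := by
  refine Finset.sum_pos (fun d hd => mul_pos ?_ (hm d hd)) ⟨a, ha⟩
  have : 1 ≤ d := (Finset.mem_Icc.mp hd).1
  exact_mod_cast Nat.lt_of_lt_of_le Nat.zero_lt_one this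

lemma shift_sum (Dmax : ℕ) (m : ℕ → ℝ) (hm : ∀ d ∈ Dset Dmax, 0 < m d)
    (g : ℕ → ℝ) (Δ ε : ℝ) (y : ℕ → ℝ) (ddag d' : ℕ)
    (hdd : ddag ∈ Dset Dmax) (hd' : d' ∈ Dset Dmax) (hne : ddag ≠ d')
    (pU : ℝ) :
    ∑ d ∈ Dset Dmax, wgt Dmax m d * g d *
        (pU - ((y d + ε * ((if d = d' then 1 else 0) - (if d = ddag then 1 else 0))) / m d) * Δ)
      = (∑ d ∈ Dset Dmax, wgt Dmax m d * g d * (pU - (y d / m d) * Δ))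
        - ε * Δ * ((d' : ℝ) * g d' - (ddag : ℝ) * g ddag)
            / (∑ d ∈ Dset Dmax, (d : ℝ) * m d) := by
  have hS : 0 < ∑ d ∈ Dset Dmax, (d : ℝ) * m d := sum_pos_S Dmax m hm hdd
  have key : ∀ d ∈ Dset Dmax,
      wgt Dmax m d * g d *
        (pU - ((y d + ε * ((if d = d' then 1 else 0) - (if d = ddag then 1 else 0))) / m d) * Δ)
      = wgt Dmax m d * g d * (pU - (y d / m d) * Δ)
        - ε * Δ * ((d : ℝ) * g d / (∑ d ∈ Dset Dmax, (d : ℝ) * m d))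
            * ((if d = d' then 1 else 0) - (if d = ddag then 1 else 0)) := by
    intro d hd
    have hmd : m d ≠ 0 := (hm d hd).ne'
    simp only [wgt]
    field_simp
    ring
  rw [Finset.sum_congr rfl key, Finset.sum_sub_distrib]
  congr 1
  simp only [mul_sub, Finset.sum_sub_distrib, mul_ite, mul_one, mul_zero]
  rw [Finset.sum_ite_eq' (Dset Dmax) d'
      (fun d => ε * Δ * ((d : ℝ) * g d / (∑ d ∈ Dset Dmax, (d : ℝ) * m d))),
    Finset.sum_ite_eq' (Dset Dmax) ddag
      (fun d => ε * Δ * ((d : ℝ) * g d / (∑ d ∈ Dset Dmax, (d : ℝ) * m d)))]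
  simp only [hd', hdd, if_true]
  ring

lemma term_nonneg (Dmax : ℕ) (m : ℕ → ℝ) (hm : ∀ d ∈ Dset Dmax, 0 < m d)
    {pP pU : ℝ} (hpP : 0 ≤ pP) (hp : pP < pU)
    {y : ℕ → ℝ} (hy : isPlan Dmax m y) {d : ℕ} (hd : d ∈ Dset Dmax) :
    0 ≤ pU - (y d / m d) * (pU - pP) := by
  have hmd := hm d hd
  have h1 : y d / m d ≤ 1 := by
    rw [div_le_one hmd]; exact (hy d hd).2
  nlinarith [(hy d hd).1, hmd]

lemma wgt_nonneg (Dmax : ℕ) (m : ℕ → ℝ) (hm : ∀ d ∈ Dset Dmax, 0 < m d)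
    {d : ℕ} (hd : d ∈ Dset Dmax) : 0 ≤ wgt Dmax m d := by
  have hS : 0 < ∑ d ∈ Dset Dmax, (d : ℝ) * m d := sum_pos_S Dmax m hm hd
  exact div_nonneg (mul_nonneg (Nat.cast_nonneg d) (hm d hd).le) hS.le

lemma gam_nonneg (Dmax : ℕ) (m : ℕ → ℝ) (hm : ∀ d ∈ Dset Dmax, 0 < m d)
    {pP pU βIA : ℝ} (hpP : 0 ≤ pP) (hp : pP < pU) (hβ0 : 0 < βIA)
    {y : ℕ → ℝ} (hy : isPlan Dmax m y) :
    0 ≤ gam Dmax m pP pU βIA y := by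
  refine mul_nonneg hβ0.le (Finset.sum_nonneg fun d hd => ?_)
  exact mul_nonneg (wgt_nonneg Dmax m hm hd) (term_nonneg Dmax m hm hpP hp hy hd)

lemma lamb_nonneg (Dmax : ℕ) (m : ℕ → ℝ) (hm : ∀ d ∈ Dset Dmax, 0 < m d)
    {pP pU βIA : ℝ} (hpP : 0 ≤ pP) (hp : pP < pU) (hβ0 : 0 < βIA)
    {y : ℕ → ℝ} (hy : isPlan Dmax m y) :
    0 ≤ lamb Dmax m pP pU βIA y := by
  refine mul_nonneg hβ0.le (Finset.sum_nonneg fun d hd => ?_)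
  have h1 : (1 : ℝ) ≤ d := by exact_mod_cast (Finset.mem_Icc.mp hd).1
  exact mul_nonneg (mul_nonneg (wgt_nonneg Dmax m hm hd) (by linarith))
    (term_nonneg Dmax m hm hpP hp hy hd)

/-- key inequalities in the degree-threshold proof for the social
optimum: shifting mass `ε` from protection at degree `d†` to protection at a larger
degree `d' > d†` strictly decreases `γ`, `λ`, and hence the exposure `e`. -/
theorem planner_shift_decreases_exposure (Dmax : ℕ) (hD : 1 ≤ Dmax)
    (m : ℕ → ℝ) (hm : ∀ d ∈ Dset Dmax, 0 < m d)
    (pP pU βIA : ℝ) (K : ℕ)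
    (hpP : 0 ≤ pP) (hp : pP < pU) (hpU : pU ≤ 1)
    (hβ0 : 0 < βIA) (hβ1 : βIA ≤ 1) (hK : 1 ≤ K)
    (ystar : ℕ → ℝ) (hplan : isPlan Dmax m ystar)
    (ddag d' : ℕ) (hddag : ddag ∈ Dset Dmax) (hd' : d' ∈ Dset Dmax)
    (hlt : ddag < d')
    (ε : ℝ) (hε0 : 0 < ε) (hε : ε < min (ystar ddag) (m d' - ystar d')) :
    gam Dmax m pP pU βIA
        (fun d => ystar d + ε * ((if d = d' then 1 else 0) - (if d = ddag then 1 else 0)))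
      < gam Dmax m pP pU βIA ystar ∧
    lamb Dmax m pP pU βIA
        (fun d => ystar d + ε * ((if d = d' then 1 else 0) - (if d = ddag then 1 else 0)))
      < lamb Dmax m pP pU βIA ystar ∧
    expo Dmax m pP pU βIA K
        (fun d => ystar d + ε * ((if d = d' then 1 else 0) - (if d = ddag then 1 else 0)))
      < expo Dmax m pP pU βIA K ystar := by
  have hne : ddag ≠ d' := hlt.ne
  have hS : 0 < ∑ d ∈ Dset Dmax, (d : ℝ) * m d := sum_pos_S Dmax m hm hddag
  have hΔ : 0 < pU - pP := sub_pos.mpr hp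
  have hεy : ε < ystar ddag := lt_of_lt_of_le hε (min_le_left _ _)
  have hεm : ε < m d' - ystar d' := lt_of_lt_of_le hε (min_le_right _ _)
  have hplan' : isPlan Dmax m
      (fun d => ystar d + ε * ((if d = d' then 1 else 0) - (if d = ddag then 1 else 0))) := by
    intro d hd
    rcases hplan d hd with ⟨h0, h1⟩
    by_cases hA : d = d'
    · subst hA
      have hB : ¬ d = ddag := fun h => hne h.symm
      norm_num [hB]
      constructor <;> nlinarith
    · by_cases hB : d = ddag
      · subst hB
        norm_num [hA]
        constructor <;> nlinarith
      · norm_num [hA, hB]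
        constructor <;> nlinarith
  have hd'1 : (1 : ℝ) ≤ (ddag : ℝ) := by exact_mod_cast (Finset.mem_Icc.mp hddag).1
  have hdd' : (ddag : ℝ) + 1 ≤ (d' : ℝ) := by exact_mod_cast Nat.succ_le_of_lt hlt
  have hgam : gam Dmax m pP pU βIA
      (fun d => ystar d + ε * ((if d = d' then 1 else 0) - (if d = ddag then 1 else 0)))
      < gam Dmax m pP pU βIA ystar := by
    have h := shift_sum Dmax m hm (fun _ => (1 : ℝ)) (pU - pP) ε ystar ddag d' hddag hd' hne pU
    simp only [mul_one] at h
    simp only [gam]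
    rw [h]
    have hc : 0 < ε * (pU - pP) * ((d' : ℝ) - (ddag : ℝ))
        / (∑ d ∈ Dset Dmax, (d : ℝ) * m d) :=
      div_pos (mul_pos (mul_pos hε0 hΔ) (by linarith)) hS
    nlinarith [mul_pos hβ0 hc]
  have hlamb : lamb Dmax m pP pU βIA
      (fun d => ystar d + ε * ((if d = d' then 1 else 0) - (if d = ddag then 1 else 0)))
      < lamb Dmax m pP pU βIA ystar := by
    have h := shift_sum Dmax m hm (fun d => (d : ℝ) - 1) (pU - pP) ε ystar ddag d' hddag hd' hne pU
    simp only [lamb]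
    rw [h]
    have hnum : 0 < (d' : ℝ) * ((d' : ℝ) - 1) - (ddag : ℝ) * ((ddag : ℝ) - 1) := by
      nlinarith
    have hc : 0 < ε * (pU - pP) *
        ((d' : ℝ) * ((d' : ℝ) - 1) - (ddag : ℝ) * ((ddag : ℝ) - 1))
        / (∑ d ∈ Dset Dmax, (d : ℝ) * m d) :=
      div_pos (mul_pos (mul_pos hε0 hΔ) hnum) hS
    nlinarith [mul_pos hβ0 hc]
  refine ⟨hgam, hlamb, ?_⟩
  have hg0 : 0 ≤ gam Dmax m pP pU βIA
      (fun d => ystar d + ε * ((if d = d' then 1 else 0) - (if d = ddag then 1 else 0))) :=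
    gam_nonneg Dmax m hm hpP hp hβ0 hplan'
  have hl0 : 0 ≤ lamb Dmax m pP pU βIA
      (fun d => ystar d + ε * ((if d = d' then 1 else 0) - (if d = ddag then 1 else 0))) :=
    lamb_nonneg Dmax m hm hpP hp hβ0 hplan'
  have hl0' : 0 ≤ lamb Dmax m pP pU βIA ystar := lamb_nonneg Dmax m hm hpP hp hβ0 hplan
  have hsum_le : ∑ k ∈ Finset.range K,
      lamb Dmax m pP pU βIA
        (fun d => ystar d + ε * ((if d = d' then 1 else 0) - (if d = ddag then 1 else 0))) ^ k
      ≤ ∑ k ∈ Finset.range K, lamb Dmax m pP pU βIA ystar ^ k :=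
    Finset.sum_le_sum fun k _ => pow_le_pow_left₀ hl0 hlamb.le k
  have hsum_pos : 0 < ∑ k ∈ Finset.range K, lamb Dmax m pP pU βIA ystar ^ k := by
    have h1 : lamb Dmax m pP pU βIA ystar ^ 0 ≤
        ∑ k ∈ Finset.range K, lamb Dmax m pP pU βIA ystar ^ k :=
      Finset.single_le_sum (fun k _ => pow_nonneg hl0' k)
        (Finset.mem_range.mpr (Nat.lt_of_lt_of_le Nat.zero_lt_one hK))
    simpa using lt_of_lt_of_le one_pos (by simpa using h1)
  simp only [expo]
  calc gam Dmax m pP pU βIA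
        (fun d => ystar d + ε * ((if d = d' then 1 else 0) - (if d = ddag then 1 else 0)))
      * ∑ k ∈ Finset.range K, lamb Dmax m pP pU βIA
          (fun d => ystar d + ε * ((if d = d' then 1 else 0) - (if d = ddag then 1 else 0))) ^ k
      ≤ gam Dmax m pP pU βIA
        (fun d => ystar d + ε * ((if d = d' then 1 else 0) - (if d = ddag then 1 else 0)))
      * ∑ k ∈ Finset.range K, lamb Dmax m pP pU βIA ystar ^ k :=
        mul_le_mul_of_nonneg_left hsum_le hg0
    _ < gam Dmax m pP pU βIA ystar * ∑ k ∈ Finset.range K, lamb Dmax m pP pU βIA ystar ^ k :=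
        mul_lt_mul_of_pos_right hgam hsum_pos
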